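/- Let p be an odd prime. Any metric p-group (A, q) of exponent p^e that is generated by its isotropic elements decomposes as an orthogonal direct sum of the hyperbolic metric group (Z/p^e Z × Z/p^e Z, h) and a metric p-group of exponent at most p^e. -/

import Mathlib

/-- The bilinear form associated to a quadratic form `q : A → kˣ`. -/
def Bform {A k : Type*} [AddCommGroup A] [Field k] (q : A → kˣ) (x y : A) : kˣ :=
  q (x + y) * (q x * q y)⁻¹

/-- `q : A → kˣ` is a quadratic form: `q(-x) = q(x)` and its associated form is bilinear. -/
def IsQuadraticForm {A k : Type*} [AddCommGroup A] [Field k] (q : A → kˣ) : Prop :=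
  (∀ x, q (-x) = q x) ∧ ∀ x y z, Bform q (x + y) z = Bform q x z * Bform q y z

/-- Non-degeneracy of the bilinear form associated to `q`. -/
def Nondeg {A k : Type*} [AddCommGroup A] [Field k] (q : A → kˣ) : Prop :=
  ∀ x, (∀ y, Bform q x y = 1) → x = 0

section Aux

variable {A k : Type*} [AddCommGroup A] [Field k] {q : A → kˣ}

theorem bform_symm (q : A → kˣ) (x y : A) : Bform q x y = Bform q y x := by
  simp only [Bform, add_comm x y, mul_comm (q x) (q y)]

theorem bform_zero_left (hq : IsQuadraticForm q) (z : A) : Bform q 0 z = 1 := by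
  have h := hq.2 0 0 z
  rw [add_zero] at h
  exact mul_eq_right.mp h.symm

theorem bform_zero_right (hq : IsQuadraticForm q) (x : A) : Bform q x 0 = 1 := by
  rw [bform_symm]; exact bform_zero_left hq x

theorem q_zero (hq : IsQuadraticForm q) : q 0 = 1 := by
  have h := bform_zero_left hq 0
  rw [Bform, add_zero, mul_inv_eq_one] at h
  exact left_eq_mul.mp h

theorem q_add (q : A → kˣ) (u v : A) : q (u + v) = q u * q v * Bform q u v := by
  rw [Bform, mul_comm (q (u + v)), ← mul_assoc, mul_inv_cancel, one_mul]

theorem bform_add_right (hq : IsQuadraticForm q) (x y z : A) :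
    Bform q x (y + z) = Bform q x y * Bform q x z := by
  rw [bform_symm q x (y + z), hq.2, bform_symm q y x, bform_symm q z x]

theorem bform_neg_left (hq : IsQuadraticForm q) (x z : A) :
    Bform q (-x) z = (Bform q x z)⁻¹ := by
  have h := hq.2 x (-x) z
  rw [add_neg_cancel, bform_zero_left hq] at h
  exact (inv_eq_of_mul_eq_one_right h.symm).symm

theorem bform_neg_right (hq : IsQuadraticForm q) (x z : A) :
    Bform q x (-z) = (Bform q x z)⁻¹ := by
  rw [bform_symm, bform_neg_left hq, bform_symm]

theorem bform_nsmul_left (hq : IsQuadraticForm q) (n : ℕ) (x z : A) :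
    Bform q (n • x) z = Bform q x z ^ n := by
  induction n with
  | zero => simpa using bform_zero_left hq z
  | succ n ih => rw [succ_nsmul, hq.2, ih, pow_succ]

theorem bform_nsmul_right (hq : IsQuadraticForm q) (n : ℕ) (x z : A) :
    Bform q x (n • z) = Bform q x z ^ n := by
  rw [bform_symm, bform_nsmul_left hq, bform_symm]

theorem bform_self (hq : IsQuadraticForm q) (x : A) : Bform q x x = q x ^ 2 := by
  have h1 : Bform q x (-x) = (q x ^ 2)⁻¹ := by
    rw [Bform, add_neg_cancel, q_zero hq, hq.1, one_mul, sq]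
  rw [bform_neg_right hq] at h1
  exact inv_injective h1

theorem q_nsmul (hq : IsQuadraticForm q) (n : ℕ) (x : A) : q (n • x) = q x ^ (n ^ 2) := by
  induction n with
  | zero => simpa using q_zero hq
  | succ n ih =>
    rw [succ_nsmul, q_add q, ih, bform_nsmul_left hq, bform_self hq, ← pow_mul, ← pow_succ,
      ← pow_add]
    congr 1
    ring

end Aux

/-- For odd `p`, an isotropically generated metric `p`-group of exponent `p^e` splits
as an orthogonal direct sum of the hyperbolic metric group `(ℤ/p^e × ℤ/p^e, h)` and a
metric `p`-group of exponent at most `p^e`. -/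
theorem stmt15 {k : Type*} [Field k] [CharZero k] [IsAlgClosed k]
    {A : Type*} [AddCommGroup A] [Finite A]
    (p e : ℕ) (hp : p.Prime) (hodd : p ≠ 2) (he : 1 ≤ e)
    (hpA : IsPGroup p (Multiplicative A))
    (q : A → kˣ) (hq : IsQuadraticForm q) (hnd : Nondeg q)
    (hexp : AddMonoid.exponent A = p ^ e)
    (hgen : AddSubgroup.closure {x : A | q x = 1} = ⊤) :
    ∃ H K : AddSubgroup A, IsCompl H K ∧
      (∀ x ∈ H, ∀ y ∈ K, Bform q x y = 1) ∧
      (∃ ζ : kˣ, IsPrimitiveRoot ζ (p ^ e) ∧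
        ∃ φ : H ≃+ ZMod (p ^ e) × ZMod (p ^ e),
          ∀ x : H, q x = ζ ^ ((φ x).1.val * (φ x).2.val)) ∧
      (∀ y ∈ K, (p ^ e) • y = 0) ∧
      (∀ y ∈ K, (∀ z ∈ K, Bform q y z = 1) → y = 0) := by
  classical
  obtain ⟨hqneg, hbil⟩ := id hq
  haveI : NeZero (p ^ e) := ⟨pow_ne_zero e hp.pos.ne'⟩
  have hsmul : ∀ x : A, (p ^ e) • x = 0 := by
    intro x
    rw [← hexp]
    exact AddMonoid.exponent_nsmul_eq_zero x
  -- an isotropic element of maximal order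
  have hexists_a : ∃ a : A, q a = 1 ∧ (p ^ (e - 1)) • a ≠ 0 := by
    by_contra hcon
    push_neg at hcon
    have hsub : {x : A | q x = 1} ⊆
        ↑(AddMonoidHom.ker ((p ^ (e - 1)) • AddMonoidHom.id A)) := by
      intro x hx
      simpa [AddMonoidHom.mem_ker] using hcon x hx
    have htop : (⊤ : AddSubgroup A) ≤ AddMonoidHom.ker ((p ^ (e - 1)) • AddMonoidHom.id A) := by
      rw [← hgen]
      exact (AddSubgroup.closure_le _).mpr hsub
    have hdvd : AddMonoid.exponent A ∣ p ^ (e - 1) := by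
      rw [AddMonoid.exponent_dvd_iff_forall_nsmul_eq_zero]
      intro x
      simpa [AddMonoidHom.mem_ker] using htop (AddSubgroup.mem_top x)
    rw [hexp] at hdvd
    have hlt : p ^ (e - 1) < p ^ e := Nat.pow_lt_pow_right hp.one_lt (by omega)
    have := Nat.le_of_dvd (pow_pos hp.pos _) hdvd
    omega
  obtain ⟨a, ha1, ha2⟩ := hexists_a
  -- a partner element with a primitive root pairing
  have hexists_b : ∃ b, Bform q a b ^ (p ^ (e - 1)) ≠ 1 := by
    by_contra hcon
    push_neg at hcon
    apply ha2
    apply hnd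
    intro y
    rw [bform_nsmul_left hq]
    exact hcon y
  obtain ⟨b, hbne⟩ := hexists_b
  set ζ : kˣ := Bform q a b with hζdef
  have hζpe : ζ ^ (p ^ e) = 1 := by
    rw [hζdef, ← bform_nsmul_left hq, hsmul a, bform_zero_left hq]
  have hζprim : IsPrimitiveRoot ζ (p ^ e) := by
    have hdvd : orderOf ζ ∣ p ^ e := orderOf_dvd_of_pow_eq_one hζpe
    obtain ⟨i, hie, hi⟩ := (Nat.dvd_prime_pow hp).mp hdvd
    have hie' : i = e := by
      by_contra hne
      exact hbne (orderOf_dvd_iff_pow_eq_one.mp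
        (hi ▸ pow_dvd_pow p (by omega : i ≤ e - 1)))
    have : orderOf ζ = p ^ e := by rw [hi, hie']
    exact this ▸ IsPrimitiveRoot.orderOf ζ
  -- the value of q at b is a p^e-th root of unity
  have hqbe : q b ^ (p ^ e) = 1 := by
    have h2e : q b ^ (p ^ e * p ^ e) = 1 := by
      have h := q_nsmul hq (p ^ e) b
      rw [hsmul, q_zero hq] at h
      rw [← sq, ← h]
    have h2 : (q b ^ 2) ^ (p ^ e) = 1 := by
      rw [← bform_self hq, ← bform_nsmul_left hq, hsmul, bform_zero_left hq]
    have hd1 : orderOf (q b) ∣ p ^ e * p ^ e := orderOf_dvd_of_pow_eq_one h2e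
    have hd2 : orderOf (q b) ∣ 2 * p ^ e := orderOf_dvd_of_pow_eq_one (by rw [pow_mul]; exact h2)
    obtain ⟨i, hie, hi⟩ := (Nat.dvd_prime_pow hp).mp (hd1.trans (by rw [← pow_add]))
    have hcop : Nat.Coprime (p ^ i) 2 :=
      Nat.Coprime.pow_left i ((Nat.coprime_primes hp Nat.prime_two).mpr hodd)
    have : orderOf (q b) ∣ p ^ e := by
      rw [hi] at hd2 ⊢
      exact (Nat.Coprime.dvd_of_dvd_mul_left hcop hd2)
    exact orderOf_dvd_iff_pow_eq_one.mp this
  obtain ⟨s, hslt, hs⟩ : ∃ s < p ^ e, ζ ^ s = q b := by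
    have hζk : IsPrimitiveRoot (ζ : k) (p ^ e) := IsPrimitiveRoot.coe_units_iff.mpr hζprim
    obtain ⟨i, hi, hpow⟩ := hζk.eq_pow_of_pow_eq_one
      (ξ := ((q b : kˣ) : k)) (by rw [← Units.val_pow_eq_pow_val, hqbe, Units.val_one])
    exact ⟨i, hi, Units.ext (by rw [← hpow, Units.val_pow_eq_pow_val])⟩
  -- the hyperbolic pair a, c
  set c : A := b - s • a with hcdef
  have hBaa : Bform q a a = 1 := by rw [bform_self hq, ha1, one_pow]
  have hBac : Bform q a c = ζ := by
    rw [hcdef, sub_eq_add_neg, bform_add_right hq, bform_neg_right hq, bform_nsmul_right hq,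
      hBaa, one_pow, inv_one, mul_one, hζdef]
  have hqc : q c = 1 := by
    rw [hcdef, sub_eq_add_neg, q_add q, hqneg, q_nsmul hq, ha1, one_pow, bform_neg_right hq,
      bform_nsmul_right hq, bform_symm q b a, ← hζdef, ← hs, mul_one, mul_inv_cancel]
  have hBcc : Bform q c c = 1 := by rw [bform_self hq, hqc, one_pow]
  have hBca : Bform q c a = ζ := by rw [bform_symm, hBac]
  -- values of q and B on combinations
  have hq_comb : ∀ m n : ℕ, q (m • a + n • c) = ζ ^ (m * n) := by
    intro m n
    rw [q_add q, q_nsmul hq, q_nsmul hq, ha1, hqc, one_pow, one_pow, one_mul, one_mul,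
      bform_nsmul_left hq, bform_nsmul_right hq, hBac, ← pow_mul, mul_comm n m]
  have hBa_comb : ∀ m n : ℕ, Bform q a (m • a + n • c) = ζ ^ n := by
    intro m n
    rw [bform_add_right hq, bform_nsmul_right hq, bform_nsmul_right hq, hBaa, hBac, one_pow,
      one_mul]
  have hBc_comb : ∀ m n : ℕ, Bform q c (m • a + n • c) = ζ ^ m := by
    intro m n
    rw [bform_add_right hq, bform_nsmul_right hq, bform_nsmul_right hq, hBca, hBcc, one_pow,
      mul_one]
  -- the homomorphism ψ : ZMod (p^e) × ZMod (p^e) →+ A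
  let fa : ZMod (p ^ e) →+ A := ZMod.lift (p ^ e) ⟨zmultiplesHom A a, by
    show ((p ^ e : ℕ) : ℤ) • a = 0; rw [natCast_zsmul]; exact hsmul a⟩
  let fc : ZMod (p ^ e) →+ A := ZMod.lift (p ^ e) ⟨zmultiplesHom A c, by
    show ((p ^ e : ℕ) : ℤ) • c = 0; rw [natCast_zsmul]; exact hsmul c⟩
  have hfa : ∀ m : ZMod (p ^ e), fa m = m.val • a := by
    intro m
    have h1 : ((m.val : ℤ) : ZMod (p ^ e)) = m := by
      push_cast
      exact ZMod.natCast_rightInverse m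
    calc fa m = fa ((m.val : ℤ) : ZMod (p ^ e)) := by rw [h1]
      _ = (m.val : ℤ) • a := ZMod.lift_coe _ _ _
      _ = m.val • a := natCast_zsmul a m.val
  have hfc : ∀ m : ZMod (p ^ e), fc m = m.val • c := by
    intro m
    have h1 : ((m.val : ℤ) : ZMod (p ^ e)) = m := by
      push_cast
      exact ZMod.natCast_rightInverse m
    calc fc m = fc ((m.val : ℤ) : ZMod (p ^ e)) := by rw [h1]
      _ = (m.val : ℤ) • c := ZMod.lift_coe _ _ _
      _ = m.val • c := natCast_zsmul c m.val
  let ψ : ZMod (p ^ e) × ZMod (p ^ e) →+ A :=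
    fa.comp (AddMonoidHom.fst _ _) + fc.comp (AddMonoidHom.snd _ _)
  have hψ : ∀ mn : ZMod (p ^ e) × ZMod (p ^ e), ψ mn = mn.1.val • a + mn.2.val • c := by
    intro mn
    simp [ψ, AddMonoidHom.add_apply, hfa, hfc]
  have hzval : ∀ m : ZMod (p ^ e), ζ ^ m.val = 1 → m = 0 := by
    intro m hm
    have hdvd : p ^ e ∣ m.val := (hζprim.pow_eq_one_iff_dvd m.val).mp hm
    have := Nat.eq_zero_of_dvd_of_lt hdvd
    rcases Nat.eq_zero_of_dvd_of_lt hdvd (ZMod.val_lt m) with h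
    exact (ZMod.val_eq_zero m).mp (Nat.eq_zero_of_dvd_of_lt hdvd (ZMod.val_lt m))
  have hψinj : Function.Injective ψ := by
    rw [injective_iff_map_eq_zero]
    rintro ⟨m, n⟩ h0
    rw [hψ] at h0
    have hn : n = 0 := by
      apply hzval
      have h := hBa_comb m.val n.val
      rw [h0, bform_zero_right hq] at h
      exact h.symm
    have hm : m = 0 := by
      apply hzval
      have h := hBc_comb m.val n.val
      rw [h0, bform_zero_right hq] at h
      exact h.symm
    simp [hm, hn, Prod.ext_iff]
  -- H and K
  set H : AddSubgroup A := ψ.range with hHdef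
  let eH : (ZMod (p ^ e) × ZMod (p ^ e)) ≃+ H := AddMonoidHom.ofInjective hψinj
  have heH : ∀ z, ((eH z : H) : A) = ψ z := fun z => AddMonoidHom.ofInjective_apply hψinj
  have hHrep : ∀ x : H, (x : A) = ψ (eH.symm x) := by
    intro x
    conv_lhs => rw [← eH.apply_symm_apply x]
    rw [heH]
  let K : AddSubgroup A :=
    { carrier := {y | Bform q a y = 1 ∧ Bform q c y = 1}
      zero_mem' := ⟨bform_zero_right hq a, bform_zero_right hq c⟩
      add_mem' := by
        rintro y z ⟨h1, h2⟩ ⟨h3, h4⟩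
        exact ⟨by rw [bform_add_right hq, h1, h3, one_mul],
          by rw [bform_add_right hq, h2, h4, one_mul]⟩
      neg_mem' := by
        rintro y ⟨h1, h2⟩
        exact ⟨by rw [bform_neg_right hq, h1, inv_one],
          by rw [bform_neg_right hq, h2, inv_one]⟩ }
  have hmemK : ∀ y : A, y ∈ K ↔ Bform q a y = 1 ∧ Bform q c y = 1 := fun _ => Iff.rfl
  -- membership of combinations in H
  have haH : ∀ m n : ZMod (p ^ e), m.val • a + n.val • c ∈ H := by
    intro m n
    exact ⟨(m, n), (hψ (m, n)).symm ▸ rfl⟩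
  -- decomposition of arbitrary elements
  have hdecomp : ∀ x : A, ∃ u ∈ H, x - u ∈ K := by
    intro x
    have hpe_ax : Bform q a x ^ (p ^ e) = 1 := by
      rw [← bform_nsmul_left hq, hsmul, bform_zero_left hq]
    have hpe_cx : Bform q c x ^ (p ^ e) = 1 := by
      rw [← bform_nsmul_left hq, hsmul, bform_zero_left hq]
    have hζk : IsPrimitiveRoot (ζ : k) (p ^ e) := IsPrimitiveRoot.coe_units_iff.mpr hζprim
    obtain ⟨β, hβlt, hβ⟩ : ∃ i < p ^ e, ζ ^ i = Bform q a x := by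
      obtain ⟨i, hi, hpow⟩ := hζk.eq_pow_of_pow_eq_one
        (ξ := ((Bform q a x : kˣ) : k))
        (by rw [← Units.val_pow_eq_pow_val, hpe_ax, Units.val_one])
      exact ⟨i, hi, Units.ext (by rw [← hpow, Units.val_pow_eq_pow_val])⟩
    obtain ⟨α, hαlt, hα⟩ : ∃ i < p ^ e, ζ ^ i = Bform q c x := by
      obtain ⟨i, hi, hpow⟩ := hζk.eq_pow_of_pow_eq_one
        (ξ := ((Bform q c x : kˣ) : k))
        (by rw [← Units.val_pow_eq_pow_val, hpe_cx, Units.val_one])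
      exact ⟨i, hi, Units.ext (by rw [← hpow, Units.val_pow_eq_pow_val])⟩
    refine ⟨α • a + β • c, ?_, ?_⟩
    · have hval_α : ((α : ZMod (p ^ e)).val) = α := by
        rw [ZMod.val_natCast, Nat.mod_eq_of_lt hαlt]
      have hval_β : ((β : ZMod (p ^ e)).val) = β := by
        rw [ZMod.val_natCast, Nat.mod_eq_of_lt hβlt]
      have := haH (α : ZMod (p ^ e)) (β : ZMod (p ^ e))
      rwa [hval_α, hval_β] at this
    · rw [hmemK]
      constructor
      · rw [sub_eq_add_neg, bform_add_right hq, bform_neg_right hq, hBa_comb, ← hβ,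
          mul_inv_cancel]
      · rw [sub_eq_add_neg, bform_add_right hq, bform_neg_right hq, hBc_comb, ← hα,
          mul_inv_cancel]
  -- orthogonality of H and K
  have horth : ∀ x ∈ H, ∀ y ∈ K, Bform q x y = 1 := by
    rintro x ⟨⟨m, n⟩, rfl⟩ y hy
    rw [hmemK] at hy
    rw [hψ, hbil, bform_nsmul_left hq, bform_nsmul_left hq, hy.1, hy.2, one_pow, one_pow,
      one_mul]
  refine ⟨H, K, ⟨?_, ?_⟩, horth, ⟨ζ, hζprim, eH.symm, ?_⟩, fun y _ => hsmul y, ?_⟩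
  · -- Disjoint
    rw [AddSubgroup.disjoint_def]
    rintro x ⟨⟨m, n⟩, rfl⟩ hxK
    rw [hmemK, hψ] at hxK
    have hn : n = 0 := hzval n (by rw [← hBa_comb m.val n.val, hxK.1])
    have hm : m = 0 := hzval m (by rw [← hBc_comb m.val n.val, hxK.2])
    rw [hm, hn]
    exact map_zero ψ
  · -- Codisjoint
    rw [codisjoint_iff, eq_top_iff]
    intro x _
    obtain ⟨u, huH, huK⟩ := hdecomp x
    exact AddSubgroup.mem_sup.mpr ⟨u, huH, x - u, huK, by abel⟩
  · -- the hyperbolic form on H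
    intro x
    have hx := hHrep x
    rw [hx, hψ, hq_comb]
  · -- nondegeneracy on K
    intro y hyK hy
    apply hnd
    intro z
    obtain ⟨u, huH, huK⟩ := hdecomp z
    have hz : z = u + (z - u) := by abel
    rw [hz, bform_add_right hq]
    have h1 : Bform q y u = 1 := by
      rw [bform_symm]
      exact horth u huH y hyK
    rw [h1, hy (z - u) huK, one_mul]
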